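/- The flattening rewrite system F on typable rewrites over an orthogonal HRS is strongly normalizing: there is no infinite sequence of ↦-steps. -/

import Mathlib

namespace HOR

/-- Simple types over a set of base types `B`. -/
inductive Ty (B : Type) : Type
  | base : B → Ty B
  | arrow : Ty B → Ty B → Ty B

/-- Simply-typed λ-terms (de Bruijn representation) over a set of constants `C`. -/
inductive Tm (B C : Type) : Type
  | var : ℕ → Tm B C
  | const : C → Tm B C
  | lam : Tm B C → Tm B C
  | app : Tm B C → Tm B C → Tm B C

variable {B C R : Type}

namespace Tm

/-- Shift the free variables with index `≥ c` up by `d`. -/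
def shift (d : ℕ) : ℕ → Tm B C → Tm B C
  | c, .var n => if n < c then .var n else .var (n + d)
  | _, .const k => .const k
  | c, .lam t => .lam (shift d (c+1) t)
  | c, .app t u => .app (shift d c t) (shift d c u)

/-- Capture-avoiding substitution of the term `u` for the variable `k`. -/
def subst : Tm B C → ℕ → Tm B C → Tm B C
  | .var n, k, u => if n = k then shift k 0 u else if k < n then .var (n-1) else .var n
  | .const c, _, _ => .const c
  | .lam t, k, u => .lam (subst t (k+1) u)
  | .app t s, k, u => .app (subst t k u) (subst s k u)

/-- Iterated abstraction `λⁿ.t`. -/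
def lamN : ℕ → Tm B C → Tm B C
  | 0, t => t
  | n+1, t => .lam (lamN n t)

/-- Iterated application `t u₁ ⋯ uₙ`. -/
def apps : Tm B C → List (Tm B C) → Tm B C
  | t, [] => t
  | t, u :: us => apps (.app t u) us

/-- Parallel (simultaneous) substitution. -/
def psubst : (ℕ → Tm B C) → Tm B C → Tm B C
  | σ, .var n => σ n
  | _, .const c => .const c
  | σ, .lam t => .lam (psubst (fun n => match n with | 0 => .var 0 | m+1 => shift 1 0 (σ m)) t)
  | σ, .app t u => .app (psubst σ t) (psubst σ u)

/-- Number of free occurrences of variable `k`. -/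
def varCount : Tm B C → ℕ → ℕ
  | .var n, k => if n = k then 1 else 0
  | .const _, _ => 0
  | .lam t, k => varCount t (k+1)
  | .app t u, k => varCount t k + varCount u k

/-- Head of a term (spine head). -/
def head : Tm B C → Tm B C
  | .app t _ => head t
  | t => t

end Tm

/-- One-step β- or η-reduction, closed under arbitrary contexts. -/
inductive BetaEtaStep : Tm B C → Tm B C → Prop
  | beta : BetaEtaStep (.app (.lam t) u) (t.subst 0 u)
  | eta : BetaEtaStep (.lam (.app (Tm.shift 1 0 t) (.var 0))) t
  | lam : BetaEtaStep t t' → BetaEtaStep (.lam t) (.lam t')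
  | appL : BetaEtaStep t t' → BetaEtaStep (.app t u) (.app t' u)
  | appR : BetaEtaStep u u' → BetaEtaStep (.app t u) (.app t u')

/-- βη-equivalence of terms (the equivalence closure of one-step βη-reduction). -/
def BetaEtaEq : Tm B C → Tm B C → Prop :=
  Relation.ReflTransGen (fun a b => BetaEtaStep a b ∨ BetaEtaStep b a)

/-- Typing of terms (simply-typed λ-calculus over a signature `sig`). -/
inductive TmTy (sig : C → Ty B) : List (Ty B) → Tm B C → Ty B → Prop
  | var : Γ[n]? = some A → TmTy sig Γ (.var n) A
  | const : TmTy sig Γ (.const c) (sig c)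
  | lam : TmTy sig (A :: Γ) t B' → TmTy sig Γ (.lam t) (.arrow A B')
  | app : TmTy sig Γ t (.arrow A B') → TmTy sig Γ u A → TmTy sig Γ (.app t u) B'

mutual
  /-- η-long β-normal (i.e. βη̄-normal) forms. -/
  inductive LongNF {B C : Type} (sig : C → Ty B) : List (Ty B) → Tm B C → Ty B → Prop
    | lam : LongNF sig (A :: Γ) t B' → LongNF sig Γ (.lam t) (.arrow A B')
    | neutral : NeutralNF sig Γ t (.base b) → LongNF sig Γ t (.base b)
  /-- Neutral spines: a variable or constant applied to η-long β-normal arguments. -/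
  inductive NeutralNF {B C : Type} (sig : C → Ty B) : List (Ty B) → Tm B C → Ty B → Prop
    | var : Γ[n]? = some A → NeutralNF sig Γ (.var n) A
    | const : NeutralNF sig Γ (.const c) (sig c)
    | app : NeutralNF sig Γ t (.arrow A B') → LongNF sig Γ u A → NeutralNF sig Γ (.app t u) B'
end

/-- `A = A₁ → ⋯ → Aₙ → β` for some base type `β`. -/
def Ty.baseAfter : ℕ → Ty B → Prop
  | 0, A => ∃ b, A = Ty.base b
  | n+1, A => ∃ A₁ A₂, A = Ty.arrow A₁ A₂ ∧ Ty.baseAfter n A₂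

/-- `t` is η-equivalent to the locally bound variable `i < b`. -/
def EtaBoundVar (b : ℕ) (t : Tm B C) (i : ℕ) : Prop :=
  i < b ∧ BetaEtaEq t (.var i)

/-- Pattern condition for the body of a left-hand side with `n` metavariables,
under `b` local binders: every occurrence of a metavariable is applied to
terms η-equivalent to pairwise distinct locally bound variables. -/
inductive PatternBody (n : ℕ) : ℕ → Tm B C → Prop
  | lam : PatternBody n (b+1) t → PatternBody n b (.lam t)
  | rigidVar : i < b → (∀ u ∈ args, PatternBody n b u) →
      PatternBody n b (Tm.apps (.var i) args)
  | rigidConst : (∀ u ∈ args, PatternBody n b u) →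
      PatternBody n b (Tm.apps (.const c) args)
  | flex : b ≤ m → m < b + n →
      (∃ is : List ℕ, is.Nodup ∧ List.Forall₂ (EtaBoundVar b) args is) →
      PatternBody n b (Tm.apps (.var m) args)

/-- A Higher-order Rewriting System: a signature together with a set of rules
`⟨ϱ, ℓ, r⟩` (indexed by the rule symbols `R`), stored in closed form
`λx₁…xₙ.ℓ`, `λx₁…xₙ.r`, where `ℓ, r` are βη̄-normal terms of the same base type,
`ℓ` is a pattern that is not η-equivalent to a variable, and `fv(r) ⊆ fv(ℓ)`
(ensured by closedness of both sides over the same variables). -/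
structure HRS (B C R : Type) where
  sig : C → Ty B
  nargs : R → ℕ
  lhsBody : R → Tm B C
  rhsBody : R → Tm B C
  ruleTy : R → Ty B
  rule_base : ∀ r, Ty.baseAfter (nargs r) (ruleTy r)
  lhs_nf : ∀ r, LongNF sig [] (Tm.lamN (nargs r) (lhsBody r)) (ruleTy r)
  rhs_nf : ∀ r, LongNF sig [] (Tm.lamN (nargs r) (rhsBody r)) (ruleTy r)
  lhs_pattern : ∀ r, PatternBody (nargs r) 0 (lhsBody r)
  lhs_not_var : ∀ r i, ¬ BetaEtaEq (lhsBody r) (Tm.var i)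

/-- The closed left-hand side `λx₁…xₙ.ℓ` of a rule. -/
def HRS.lhs (S : HRS B C R) (r : R) : Tm B C := Tm.lamN (S.nargs r) (S.lhsBody r)

/-- The closed right-hand side `λx₁…xₙ.r` of a rule. -/
def HRS.rhs (S : HRS B C R) (r : R) : Tm B C := Tm.lamN (S.nargs r) (S.rhsBody r)

/-- Left-linearity: every variable of the left-hand side occurs exactly once. -/
def LeftLinear (S : HRS B C R) : Prop :=
  ∀ r, ∀ i < S.nargs r, Tm.varCount (S.lhsBody r) i = 1

/-- `u` occurs as a subterm under `k` binders. -/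
inductive SubtermAt : Tm B C → ℕ → Tm B C → Prop
  | refl : SubtermAt t 0 t
  | lam : SubtermAt t k u → SubtermAt (.lam t) (k+1) u
  | appL : SubtermAt t k u → SubtermAt (.app t s) k u
  | appR : SubtermAt s k u → SubtermAt (.app t s) k u

/-- No critical pairs: no non-variable subterm of a left-hand side unifies
(modulo βη, renaming apart) with a left-hand side, except trivially. -/
def NoCriticalPairs (S : HRS B C R) : Prop :=
  ∀ r₁ r₂ (k : ℕ) (u : Tm B C), SubtermAt (S.lhsBody r₁) k u →
    ¬ (∃ m, Tm.head u = Tm.var m ∧ k ≤ m) →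
    (∃ σ₁ σ₂ : ℕ → Tm B C, (∀ i < k, σ₁ i = .var i) ∧ (∀ i < k, σ₂ i = .var i) ∧
        BetaEtaEq (Tm.psubst σ₁ u) (Tm.psubst σ₂ (Tm.shift k 0 (S.lhsBody r₂)))) →
    (k = 0 ∧ u = S.lhsBody r₁ ∧ r₁ = r₂)

/-- An HRS is orthogonal when it is left-linear and has no critical pairs. -/
def Orthogonal (S : HRS B C R) : Prop := LeftLinear S ∧ NoCriticalPairs S

/-- The rewrite relation `→R` of an HRS on βη̄-normal terms:
root steps `θℓ → θr` closed under abstraction and application congruence. -/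
inductive RStep (S : HRS B C R) : List (Ty B) → Ty B → Tm B C → Tm B C → Prop
  | root : LongNF S.sig Γ s A → LongNF S.sig Γ t A →
      args.length = S.nargs r →
      BetaEtaEq (Tm.apps (S.lhs r) args) s → BetaEtaEq (Tm.apps (S.rhs r) args) t →
      RStep S Γ A s t
  | absC : RStep S (A :: Γ) B' s t → RStep S Γ (.arrow A B') (.lam s) (.lam t)
  | appL : RStep S Γ (.arrow A B') s t → TmTy S.sig Γ u A →
      RStep S Γ B' (.app s u) (.app t u)
  | appR : TmTy S.sig Γ s (.arrow A B') → RStep S Γ A u v →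
      RStep S Γ B' (.app s u) (.app s v)

/-- Typed βη-equivalence judgment `Γ ⊢ s ≐ t : A`. -/
inductive TmEq (sig : C → Ty B) : List (Ty B) → Tm B C → Tm B C → Ty B → Prop
  | beta : TmTy sig (A :: Γ) s B' → TmTy sig Γ t A →
      TmEq sig Γ (.app (.lam s) t) (s.subst 0 t) B'
  | eta : TmTy sig Γ s (.arrow A B') →
      TmEq sig Γ (.lam (.app (Tm.shift 1 0 s) (.var 0))) s (.arrow A B')
  | refl : TmTy sig Γ s A → TmEq sig Γ s s A
  | symm : TmEq sig Γ s t A → TmEq sig Γ t s A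
  | trans : TmEq sig Γ s t A → TmEq sig Γ t u A → TmEq sig Γ s u A
  | congAbs : TmEq sig (A :: Γ) s t B' → TmEq sig Γ (.lam s) (.lam t) (.arrow A B')
  | congApp : TmEq sig Γ s s' (.arrow A B') → TmEq sig Γ t t' A →
      TmEq sig Γ (.app s t) (.app s' t') B'

/-- Rewrites: variables, constants, rule symbols, abstraction and application
congruences, and composition `ρ;σ`. -/
inductive Rw (B C R : Type) : Type
  | var : ℕ → Rw B C R
  | const : C → Rw B C R
  | rule : R → Rw B C R
  | lam : Rw B C R → Rw B C R
  | app : Rw B C R → Rw B C R → Rw B C R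
  | comp : Rw B C R → Rw B C R → Rw B C R

namespace Rw

/-- The source term of a rewrite. -/
def src (S : HRS B C R) : Rw B C R → Tm B C
  | .var n => .var n
  | .const c => .const c
  | .rule r => S.lhs r
  | .lam ρ => .lam (src S ρ)
  | .app ρ σ => .app (src S ρ) (src S σ)
  | .comp ρ _ => src S ρ

/-- The target term of a rewrite. -/
def tgt (S : HRS B C R) : Rw B C R → Tm B C
  | .var n => .var n
  | .const c => .const c
  | .rule r => S.rhs r
  | .lam ρ => .lam (tgt S ρ)
  | .app ρ σ => .app (tgt S ρ) (tgt S σ)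
  | .comp _ σ => tgt S σ

/-- Shift the free variables with index `≥ c` up by `d`. -/
def shiftR (d : ℕ) : ℕ → Rw B C R → Rw B C R
  | c, .var n => if n < c then .var n else .var (n + d)
  | _, .const k => .const k
  | _, .rule r => .rule r
  | c, .lam ρ => .lam (shiftR d (c+1) ρ)
  | c, .app ρ σ => .app (shiftR d c ρ) (shiftR d c σ)
  | c, .comp ρ σ => .comp (shiftR d c ρ) (shiftR d c σ)

/-- Capture-avoiding substitution of the rewrite `ν` for the variable `k`.
When `ν` is (the coercion of) a term this is rewrite/term substitution `ρ{x\t}`,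
and when the rewrite being substituted into is (the coercion of) a term this is
term/rewrite substitution `s⟨x\ρ⟩`. -/
def substR : Rw B C R → ℕ → Rw B C R → Rw B C R
  | .var n, k, ν => if n = k then shiftR k 0 ν else if k < n then .var (n-1) else .var n
  | .const c, _, _ => .const c
  | .rule r, _, _ => .rule r
  | .lam ρ, k, ν => .lam (substR ρ (k+1) ν)
  | .app ρ σ, k, ν => .app (substR ρ k ν) (substR σ k ν)
  | .comp ρ σ, k, ν => .comp (substR ρ k ν) (substR σ k ν)

/-- Multisteps: rewrites with no occurrence of composition. -/
def IsMultistep : Rw B C R → Prop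
  | .lam ρ => IsMultistep ρ
  | .app ρ σ => IsMultistep ρ ∧ IsMultistep σ
  | .comp _ _ => False
  | _ => True

/-- Iterated abstraction. -/
def lamN : ℕ → Rw B C R → Rw B C R
  | 0, ρ => ρ
  | n+1, ρ => .lam (lamN n ρ)

/-- Iterated application. -/
def apps : Rw B C R → List (Rw B C R) → Rw B C R
  | ρ, [] => ρ
  | ρ, σ :: σs => apps (.app ρ σ) σs

end Rw

/-- Coercion of a term to the (unit/empty) rewrite it denotes. -/
def Tm.toRw : Tm B C → Rw B C R
  | .var n => .var n
  | .const c => .const c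
  | .lam t => .lam (toRw t)
  | .app t u => .app (toRw t) (toRw u)

/-- Higher-Order Rewriting Logic: `Γ ⊢ ρ : s → t : A`. -/
inductive RwTy (S : HRS B C R) : List (Ty B) → Rw B C R → Tm B C → Tm B C → Ty B → Prop
  | var : Γ[n]? = some A → RwTy S Γ (.var n) (.var n) (.var n) A
  | const : RwTy S Γ (.const c) (.const c) (.const c) (S.sig c)
  | rule : RwTy S Γ (.rule r) (S.lhs r) (S.rhs r) (S.ruleTy r)
  | abs : RwTy S (A :: Γ) ρ s t B' → RwTy S Γ (.lam ρ) (.lam s) (.lam t) (.arrow A B')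
  | app : RwTy S Γ ρ s₀ s₁ (.arrow A B') → RwTy S Γ σ t₀ t₁ A →
      RwTy S Γ (.app ρ σ) (.app s₀ t₀) (.app s₁ t₁) B'
  | comp : RwTy S Γ ρ s₀ s₁ A → RwTy S Γ σ s₁ s₂ A → RwTy S Γ (.comp ρ σ) s₀ s₂ A
  | conv : RwTy S Γ ρ s' t' A → TmEq S.sig Γ s s' A → TmEq S.sig Γ t' t A →
      RwTy S Γ ρ s t A

/-- A rewrite is well-typed (typable) if it has some typing judgment. -/
def WT (S : HRS B C R) (ρ : Rw B C R) : Prop := ∃ Γ s t A, RwTy S Γ ρ s t A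

/-- Permutation equivalence `ρ ≈ σ` of rewrites: the reflexive, symmetric,
transitive, contextual closure of the axioms IdL, IdR, Assoc, Abs, App,
BetaTR, BetaRT and Eta, each applying only between well-typed rewrites. -/
inductive PermEq (S : HRS B C R) : Rw B C R → Rw B C R → Prop
  | idL : WT S (.comp (Tm.toRw (Rw.src S ρ)) ρ) → WT S ρ →
      PermEq S (.comp (Tm.toRw (Rw.src S ρ)) ρ) ρ
  | idR : WT S (.comp ρ (Tm.toRw (Rw.tgt S ρ))) → WT S ρ →
      PermEq S (.comp ρ (Tm.toRw (Rw.tgt S ρ))) ρ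
  | assoc : WT S (.comp (.comp ρ σ) τ) → WT S (.comp ρ (.comp σ τ)) →
      PermEq S (.comp (.comp ρ σ) τ) (.comp ρ (.comp σ τ))
  | abs : WT S (.comp (.lam ρ) (.lam σ)) → WT S (.lam (.comp ρ σ)) →
      PermEq S (.comp (.lam ρ) (.lam σ)) (.lam (.comp ρ σ))
  | app : WT S (.comp (.app ρ₁ ρ₂) (.app σ₁ σ₂)) → WT S (.app (.comp ρ₁ σ₁) (.comp ρ₂ σ₂)) →
      PermEq S (.comp (.app ρ₁ ρ₂) (.app σ₁ σ₂)) (.app (.comp ρ₁ σ₁) (.comp ρ₂ σ₂))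
  | betaTR : WT S (.app (.lam (Tm.toRw s)) ρ) → WT S (Rw.substR (Tm.toRw s) 0 ρ) →
      PermEq S (.app (.lam (Tm.toRw s)) ρ) (Rw.substR (Tm.toRw s) 0 ρ)
  | betaRT : WT S (.app (.lam ρ) (Tm.toRw s)) → WT S (Rw.substR ρ 0 (Tm.toRw s)) →
      PermEq S (.app (.lam ρ) (Tm.toRw s)) (Rw.substR ρ 0 (Tm.toRw s))
  | eta : WT S (.lam (.app (Rw.shiftR 1 0 ρ) (.var 0))) → WT S ρ →
      PermEq S (.lam (.app (Rw.shiftR 1 0 ρ) (.var 0))) ρ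
  | refl : WT S ρ → PermEq S ρ ρ
  | symm : PermEq S ρ σ → PermEq S σ ρ
  | trans : PermEq S ρ σ → PermEq S σ τ → PermEq S ρ τ
  | congLam : PermEq S ρ ρ' → PermEq S (.lam ρ) (.lam ρ')
  | congAppL : PermEq S ρ ρ' → WT S σ → PermEq S (.app ρ σ) (.app ρ' σ)
  | congAppR : WT S ρ → PermEq S σ σ' → PermEq S (.app ρ σ) (.app ρ σ')
  | congCompL : PermEq S ρ ρ' → WT S σ → PermEq S (.comp ρ σ) (.comp ρ' σ)
  | congCompR : WT S ρ → PermEq S σ σ' → PermEq S (.comp ρ σ) (.comp ρ σ')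

/-- Rewrite/rewrite substitution `ρ⟦x\σ⟧ := ρ{x\src(σ)} ; tgt(ρ)⟨x\σ⟩`. -/
def substRR (S : HRS B C R) (ρ : Rw B C R) (k : ℕ) (σ : Rw B C R) : Rw B C R :=
  .comp (Rw.substR ρ k (Tm.toRw (Rw.src S σ))) (Rw.substR (Tm.toRw (Rw.tgt S ρ)) k σ)

/-- The rules of the flattening system `F`, closed under arbitrary contexts. -/
inductive FStepRaw (S : HRS B C R) : Rw B C R → Rw B C R → Prop
  | abs : FStepRaw S (.lam (.comp ρ σ)) (.comp (.lam ρ) (.lam σ))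
  | app1 : Rw.IsMultistep μ →
      FStepRaw S (.app (.comp ρ σ) μ) (.comp (.app ρ (Tm.toRw (Rw.src S μ))) (.app σ μ))
  | app2 : Rw.IsMultistep μ →
      FStepRaw S (.app μ (.comp ρ σ)) (.comp (.app μ ρ) (.app (Tm.toRw (Rw.tgt S μ)) σ))
  | app3 : FStepRaw S (.app (.comp ρ₁ ρ₂) (.comp σ₁ σ₂))
      (.comp (.app (.comp ρ₁ ρ₂) (Tm.toRw (Rw.src S σ₁)))
             (.app (Tm.toRw (Rw.tgt S ρ₂)) (.comp σ₁ σ₂)))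
  | betaM : Rw.IsMultistep μ → Rw.IsMultistep ν →
      FStepRaw S (.app (.lam μ) ν) (Rw.substR μ 0 ν)
  | etaM : Rw.IsMultistep μ →
      FStepRaw S (.lam (.app (Rw.shiftR 1 0 μ) (.var 0))) μ
  | congLam : FStepRaw S ρ ρ' → FStepRaw S (.lam ρ) (.lam ρ')
  | congAppL : FStepRaw S ρ ρ' → FStepRaw S (.app ρ σ) (.app ρ' σ)
  | congAppR : FStepRaw S σ σ' → FStepRaw S (.app ρ σ) (.app ρ σ')
  | congCompL : FStepRaw S ρ ρ' → FStepRaw S (.comp ρ σ) (.comp ρ' σ)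
  | congCompR : FStepRaw S σ σ' → FStepRaw S (.comp ρ σ) (.comp ρ σ')

/-- A flattening step `ρ ↦ σ` (the system `F` is defined between typable rewrites). -/
def FStep (S : HRS B C R) (ρ σ : Rw B C R) : Prop := FStepRaw S ρ σ ∧ WT S ρ

/-- `↦`-normal forms. -/
def FNormal (S : HRS B C R) (ρ : Rw B C R) : Prop := ∀ σ, ¬ FStep S ρ σ

/-- `ρ ↦* σ`. -/
def FStar (S : HRS B C R) : Rw B C R → Rw B C R → Prop := Relation.ReflTransGen (FStep S)

open Classical in
/-- `ρ♭`: the `↦`-normal form of `ρ` (when it exists; it is unique for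
typable rewrites by strong normalization and confluence of `F`). -/
noncomputable def flatten (S : HRS B C R) (ρ : Rw B C R) : Rw B C R :=
  if h : ∃ σ, FStar S ρ σ ∧ FNormal S σ then h.choose else ρ

/-- Splitting `μ ⋗ μ₁;μ₂` of a multistep. -/
inductive Split (S : HRS B C R) : Rw B C R → Rw B C R → Rw B C R → Prop
  | var : Split S (.var n) (.var n) (.var n)
  | const : Split S (.const c) (.const c) (.const c)
  | ruleL : Split S (.rule r) (.rule r) (Tm.toRw (S.rhs r))
  | ruleR : Split S (.rule r) (Tm.toRw (S.lhs r)) (.rule r)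
  | abs : Split S μ μ₁ μ₂ → Split S (.lam μ) (.lam μ₁) (.lam μ₂)
  | app : Split S μ μ₁ μ₂ → Split S ν ν₁ ν₂ →
      Split S (.app μ ν) (.app μ₁ ν₁) (.app μ₂ ν₂)

/-- Flat permutation equivalence `ρ ∼ σ` between `↦`-normal rewrites:
generated by associativity and the Perm axiom, closed under reflexivity,
symmetry, transitivity and composition contexts. -/
inductive FlatEq (S : HRS B C R) : Rw B C R → Rw B C R → Prop
  | assoc : FlatEq S (.comp (.comp ρ σ) τ) (.comp ρ (.comp σ τ))
  | perm : Rw.IsMultistep μ → FNormal S μ → Split S μ μ₁ μ₂ →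
      FlatEq S μ (.comp (flatten S μ₁) (flatten S μ₂))
  | refl : FlatEq S ρ ρ
  | symm : FlatEq S ρ σ → FlatEq S σ ρ
  | trans : FlatEq S ρ σ → FlatEq S σ τ → FlatEq S ρ τ
  | congCompL : FlatEq S ρ ρ' → FlatEq S (.comp ρ σ) (.comp ρ' σ)
  | congCompR : FlatEq S σ σ' → FlatEq S (.comp ρ σ) (.comp ρ σ')

/-- Weak projection `μ/ν ⇝ ξ` of coinitial multisteps. -/
inductive WProj (S : HRS B C R) : Rw B C R → Rw B C R → Rw B C R → Prop
  | var : WProj S (.var n) (.var n) (.var n)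
  | const : WProj S (.const c) (.const c) (.const c)
  | rule : WProj S (.rule r) (.rule r) (Tm.toRw (S.rhs r))
  | ruleL : WProj S (.rule r) (Tm.toRw (S.lhs r)) (.rule r)
  | ruleR : WProj S (Tm.toRw (S.lhs r)) (.rule r) (Tm.toRw (S.rhs r))
  | abs : WProj S μ ν ξ → WProj S (.lam μ) (.lam ν) (.lam ξ)
  | app : WProj S μ₁ ν₁ ξ₁ → WProj S μ₂ ν₂ ξ₂ →
      WProj S (.app μ₁ μ₂) (.app ν₁ ν₂) (.app ξ₁ ξ₂)

/-- Compatibility of coinitial multisteps: both are η-expanded β-normal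
forms, except that heads may be sources of rules. -/
inductive Compat (S : HRS B C R) : Rw B C R → Rw B C R → Prop
  | cvar : ms.length = ns.length →
      (∀ (i : ℕ) (m n' : Rw B C R), ms[i]? = some m → ns[i]? = some n' → Compat S m n') →
      Compat S (Rw.lamN k (Rw.apps (.var v) ms)) (Rw.lamN k (Rw.apps (.var v) ns))
  | ccon : ms.length = ns.length →
      (∀ (i : ℕ) (m n' : Rw B C R), ms[i]? = some m → ns[i]? = some n' → Compat S m n') →
      Compat S (Rw.lamN k (Rw.apps (.const c) ms)) (Rw.lamN k (Rw.apps (.const c) ns))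
  | crule : ms.length = ns.length →
      (∀ (i : ℕ) (m n' : Rw B C R), ms[i]? = some m → ns[i]? = some n' → Compat S m n') →
      Compat S (Rw.lamN k (Rw.apps (.rule r) ms)) (Rw.lamN k (Rw.apps (.rule r) ns))
  | cruleL : ms.length = ns.length →
      (∀ (i : ℕ) (m n' : Rw B C R), ms[i]? = some m → ns[i]? = some n' → Compat S m n') →
      Compat S (Rw.lamN k (Rw.apps (.rule r) ms)) (Rw.lamN k (Rw.apps (Tm.toRw (S.lhs r)) ns))
  | cruleR : ms.length = ns.length →
      (∀ (i : ℕ) (m n' : Rw B C R), ms[i]? = some m → ns[i]? = some n' → Compat S m n') →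
      Compat S (Rw.lamN k (Rw.apps (Tm.toRw (S.lhs r)) ms)) (Rw.lamN k (Rw.apps (.rule r) ns))

open Classical in
/-- The projection operator `μ/ν` for coinitial multisteps. -/
noncomputable def mproj (S : HRS B C R) (μ ν : Rw B C R) : Rw B C R :=
  if h : ∃ p : Rw B C R × Rw B C R × Rw B C R,
      flatten S p.1 = flatten S μ ∧ flatten S p.2.1 = flatten S ν ∧ WProj S p.1 p.2.1 p.2.2
  then flatten S h.choose.2.2 else μ

/-- Projection of a flat multistep over a coinitial flat rewrite. -/
noncomputable def proj1 (S : HRS B C R) : Rw B C R → Rw B C R → Rw B C R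
  | μ, .comp ρ₁ ρ₂ => proj1 S (proj1 S μ ρ₁) ρ₂
  | μ, ν => mproj S μ ν

/-- Projection of a flat rewrite over a coinitial flat multistep. -/
noncomputable def proj2 (S : HRS B C R) : Rw B C R → Rw B C R → Rw B C R
  | .comp ρ₁ ρ₂, μ => .comp (proj2 S ρ₁ μ) (proj2 S ρ₂ (proj1 S μ ρ₁))
  | ν, μ => mproj S ν μ

/-- Projection `ρ/σ` of a flat rewrite over a coinitial flat rewrite. -/
noncomputable def proj3 (S : HRS B C R) : Rw B C R → Rw B C R → Rw B C R
  | ρ, .comp σ₁ σ₂ => proj3 S (proj3 S ρ σ₁) σ₂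
  | ρ, μ => proj2 S ρ μ

/-- Projection `ρ ⫽ σ := ρ♭ / σ♭` for arbitrary coinitial rewrites. -/
noncomputable def aproj (S : HRS B C R) (ρ σ : Rw B C R) : Rw B C R :=
  proj3 S (flatten S ρ) (flatten S σ)

/-- Flat rewrites: compositions of `↦`-normal (flat) multisteps. -/
inductive IsFlat (S : HRS B C R) : Rw B C R → Prop
  | ms : Rw.IsMultistep μ → FNormal S μ → IsFlat S μ
  | comp : IsFlat S ρ → IsFlat S σ → IsFlat S (.comp ρ σ)

/-- The rewrite denoted by a sequential rewrite `μ₁;…;μₙ;s̄`. -/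
def seqToRw (p : List (Rw B C R) × Tm B C) : Rw B C R :=
  p.1.foldr Rw.comp (Tm.toRw p.2)

/-- Well-formedness of a sequential rewrite: all components are flat multisteps. -/
def SeqOK (S : HRS B C R) (p : List (Rw B C R) × Tm B C) : Prop :=
  (∀ μ ∈ p.1, Rw.IsMultistep μ ∧ FNormal S μ) ∧ FNormal S (Tm.toRw p.2)

/-- Empty multisteps: those containing no rule symbols, i.e. coerced terms. -/
def EmptyMs (μ : Rw B C R) : Prop := ∃ t : Tm B C, μ = Tm.toRw t

/-- The standardization relation `▷` on sequential rewrites. -/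
inductive Std (S : HRS B C R) : List (Rw B C R) × Tm B C → List (Rw B C R) × Tm B C → Prop
  | del : Std S (Tm.toRw t :: l, s) (l, s)
  | pull : FlatEq S μ₁₂ (.comp μ₁ μ₂) → FlatEq S μ₂₃ (.comp μ₂ μ₃) → ¬ EmptyMs μ₂ →
      Std S (μ₁ :: μ₂₃ :: l, s) (μ₁₂ :: μ₃ :: l, s)
  | cong : Std S (l, s) (l', s) → Std S (μ :: l, s) (μ :: l', s)

/-- Strong equivalence `ρ ≍ σ` of sequential rewrites: same length, same final
term, componentwise flat-permutation-equivalent multisteps. -/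
def StrongEq (S : HRS B C R) (p q : List (Rw B C R) × Tm B C) : Prop :=
  p.2 = q.2 ∧ List.Forall₂ (FlatEq S) p.1 q.1

/-- An unfolding of a multistep `μ`: a sequential rewrite of non-empty
multisteps flat-permutation-equivalent to `μ`. -/
def Unfolding (S : HRS B C R) (μ : Rw B C R) (p : List (Rw B C R) × Tm B C) : Prop :=
  SeqOK S p ∧ (∀ ν ∈ p.1, ¬ EmptyMs ν) ∧ FlatEq S μ (seqToRw p)

/-- The finiteness condition: the lengths of unfoldings of any multistep are bounded. -/
def FinCond (S : HRS B C R) : Prop :=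
  ∀ μ : Rw B C R, Rw.IsMultistep μ → WT S μ → ∃ N, ∀ p, Unfolding S μ p → p.1.length ≤ N

section SNbeta

namespace Tm

variable {B C : Type}

def liftS (σ : ℕ → Tm B C) : ℕ → Tm B C
  | 0 => .var 0
  | m+1 => Tm.shift 1 0 (σ m)

theorem psubst_lam (σ : ℕ → Tm B C) (t : Tm B C) :
    psubst σ (.lam t) = .lam (psubst (liftS σ) t) := by
  rfl

theorem shift_zero (t : Tm B C) : ∀ c, shift 0 c t = t := by
  induction t with
  | var n => intro c; by_cases h : n < c <;> simp [shift, h]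
  | const k => intro c; rfl
  | lam t ih => intro c; simp only [shift]; rw [ih]
  | app t u iht ihu => intro c; simp only [shift]; rw [iht, ihu]

theorem shift_shift (t : Tm B C) : ∀ c c' d, c' ≤ c →
    shift d (c+1) (shift 1 c' t) = shift 1 c' (shift d c t) := by
  induction t with
  | var n =>
      intro c c' d h
      by_cases h1 : n < c'
      · have h2 : n < c := by omega
        have h3 : n < c + 1 := by omega
        simp [shift, h1, h2, h3]
      · by_cases h2 : n < c
        · have h3 : n + 1 < c + 1 := by omega
          simp [shift, h1, h2, h3]
        · have h3 : ¬ (n + 1 < c + 1) := by omega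
          have h4 : ¬ (n + d < c') := by omega
          simp only [shift, if_neg h1, if_neg h2, if_neg h3, if_neg h4]
          congr 1 <;> omega
  | const k => intros; rfl
  | lam t ih => intro c c' d h; simp only [shift]; rw [ih _ _ _ (by omega)]
  | app t u iht ihu => intro c c' d h; simp only [shift]; rw [iht _ _ _ h, ihu _ _ _ h]

theorem shift_add (t : Tm B C) : ∀ a b c, shift a c (shift b c t) = shift (a+b) c t := by
  induction t with
  | var n =>
      intro a b c
      by_cases h : n < c
      · simp [shift, h]
      · have h2 : ¬ (n + b < c) := by omega
        simp only [shift, if_neg h, if_neg h2]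
        congr 1 <;> omega
  | const k => intros; rfl
  | lam t ih => intro a b c; simp only [shift]; rw [ih]
  | app t u iht ihu => intro a b c; simp only [shift]; rw [iht, ihu]

theorem psubst_ext {σ σ' : ℕ → Tm B C} (t : Tm B C) (h : ∀ n, σ n = σ' n) :
    psubst σ t = psubst σ' t := by
  induction t generalizing σ σ' with
  | var n => exact h n
  | const k => rfl
  | lam t ih =>
      rw [psubst_lam, psubst_lam]
      congr 1
      apply ih; intro n; cases n with
      | zero => rfl
      | succ m => simp only [liftS, h m]
  | app t u iht ihu => show Tm.app _ _ = Tm.app _ _; rw [iht h, ihu h]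

theorem psubst_id (t : Tm B C) : psubst (fun n => .var n) t = t := by
  induction t with
  | var n => rfl
  | const k => rfl
  | lam t ih =>
      rw [psubst_lam]
      congr 1
      rw [psubst_ext t (σ' := fun n => .var n)]
      · exact ih
      · intro n; cases n with
        | zero => rfl
        | succ m => simp [liftS, shift]
  | app t u iht ihu => show Tm.app _ _ = _; rw [iht, ihu]

theorem psubst_shift_cut (t : Tm B C) : ∀ (σ : ℕ → Tm B C) c d,
    psubst σ (shift d c t) = psubst (fun n => if n < c then σ n else σ (n+d)) t := by
  induction t with
  | var n => intro σ c d; by_cases h : n < c <;> simp [shift, psubst, h]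
  | const k => intros; rfl
  | lam t ih =>
      intro σ c d
      simp only [shift]
      rw [psubst_lam, psubst_lam, ih]
      congr 1
      apply psubst_ext; intro n
      cases n with
      | zero => simp [liftS]
      | succ m =>
          simp only [liftS]
          by_cases hm : m < c
          · simp [hm, Nat.succ_lt_succ hm]
          · have h2 : ¬ (m+1 < c+1) := by omega
            have h3 : m+1+d = (m+d)+1 := by omega
            simp [hm, h2, h3, liftS]
  | app t u iht ihu =>
      intro σ c d; simp only [shift]
      show Tm.app _ _ = Tm.app _ _
      rw [iht, ihu]

theorem shift_psubst (t : Tm B C) : ∀ (σ : ℕ → Tm B C) c d,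
    shift d c (psubst σ t) = psubst (fun n => shift d c (σ n)) t := by
  induction t with
  | var n => intros; rfl
  | const k => intros; rfl
  | lam t ih =>
      intro σ c d
      rw [psubst_lam, psubst_lam]
      simp only [shift]
      congr 1
      rw [ih]
      apply psubst_ext; intro n
      cases n with
      | zero => simp [liftS, shift]
      | succ m => simp only [liftS]; rw [shift_shift _ _ _ _ (Nat.zero_le c)]
  | app t u iht ihu =>
      intro σ c d; simp only [psubst, shift]
      show Tm.app _ _ = Tm.app _ _
      rw [iht, ihu]

theorem psubst_psubst (t : Tm B C) : ∀ (σ τ : ℕ → Tm B C),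
    psubst τ (psubst σ t) = psubst (fun n => psubst τ (σ n)) t := by
  induction t with
  | var n => intros; rfl
  | const k => intros; rfl
  | lam t ih =>
      intro σ τ
      rw [psubst_lam, psubst_lam, psubst_lam, ih]
      congr 1
      apply psubst_ext; intro n
      cases n with
      | zero => rfl
      | succ m =>
          simp only [liftS]
          rw [psubst_shift_cut, shift_psubst]
          apply psubst_ext; intro j
          simp [liftS]
  | app t u iht ihu =>
      intro σ τ
      show Tm.app _ _ = Tm.app _ _
      rw [iht, ihu]

/-- The single-substitution environment. -/
def singleS (k : ℕ) (u : Tm B C) : ℕ → Tm B C :=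
  fun n => if n = k then shift k 0 u else if k < n then .var (n-1) else .var n

theorem singleS_self (k : ℕ) (u : Tm B C) : singleS k u k = shift k 0 u := by
  simp [singleS]

theorem singleS_lt {k n : ℕ} (h : n < k) (u : Tm B C) : singleS k u n = .var n := by
  simp only [singleS, if_neg (show ¬ n = k by omega), if_neg (show ¬ k < n by omega)]

theorem singleS_gt {k n : ℕ} (h : k < n) (u : Tm B C) : singleS k u n = .var (n-1) := by
  simp only [singleS, if_neg (show ¬ n = k by omega), if_pos h]

theorem subst_as_psubst (t : Tm B C) : ∀ k (u : Tm B C),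
    t.subst k u = psubst (singleS k u) t := by
  induction t with
  | var n => intros; rfl
  | const k => intros; rfl
  | lam t ih =>
      intro k u
      show Tm.lam _ = _
      rw [psubst_lam]
      congr 1
      rw [ih]
      apply psubst_ext; intro n
      cases n with
      | zero => simp [singleS, liftS]
      | succ m =>
          show singleS (k+1) u (m+1) = liftS (singleS k u) (m+1)
          have eR : liftS (singleS k u) (m+1) = shift 1 0 (singleS k u m) := rfl
          rw [eR]
          by_cases h1 : m = k
          · subst h1
            rw [singleS_self, singleS_self, shift_add, Nat.add_comm 1 m]
          · by_cases h2 : k < m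
            · rw [singleS_gt (show k+1 < m+1 by omega), singleS_gt h2]
              simp only [shift, if_neg (show ¬ (m-1 < 0) by omega)]
              congr 1 <;> omega
            · rw [singleS_lt (show m+1 < k+1 by omega), singleS_lt (show m < k by omega)]
              simp [shift]
  | app t u iht ihu =>
      intro k v
      show Tm.app _ _ = Tm.app _ _
      rw [iht, ihu]

theorem shift_as_psubst (t : Tm B C) : ∀ c d,
    shift d c t = psubst (fun n => if n < c then .var n else .var (n+d)) t := by
  intro c d
  have h := psubst_shift_cut t (fun n => .var n) c d
  rw [psubst_id] at h
  exact h

theorem subst_shift_cancel (t : Tm B C) (k : ℕ) (u : Tm B C) :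
    (shift 1 k t).subst k u = t := by
  rw [subst_as_psubst, psubst_shift_cut]
  rw [psubst_ext t (σ' := fun n => .var n), psubst_id]
  intro n
  by_cases h : n < k
  · rw [if_pos h, singleS_lt h]
  · rw [if_neg h, singleS_gt (show k < n + 1 by omega)]
    norm_num

theorem subst_subst0 (s : Tm B C) (r u : Tm B C) (k : ℕ) :
    (s.subst 0 r).subst k u = (s.subst (k+1) u).subst 0 (r.subst k u) := by
  rw [subst_as_psubst s 0 r, subst_as_psubst s (k+1) u,
      subst_as_psubst (psubst (singleS 0 r) s) k u,
      subst_as_psubst (psubst (singleS (k+1) u) s) 0 (r.subst k u),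
      psubst_psubst, psubst_psubst]
  apply psubst_ext; intro n
  cases n with
  | zero =>
      show psubst (singleS k u) (singleS 0 r 0) =
        psubst (singleS 0 (r.subst k u)) (singleS (k+1) u 0)
      have e1 : singleS 0 r 0 = r := by rw [singleS_self, shift_zero]
      have e2 : singleS (k+1) u 0 = .var 0 := singleS_lt (by omega) u
      rw [e1, e2]
      show psubst (singleS k u) r = singleS 0 (r.subst k u) 0
      rw [singleS_self, shift_zero, subst_as_psubst]
  | succ m =>
      show psubst (singleS k u) (singleS 0 r (m+1)) =
        psubst (singleS 0 (r.subst k u)) (singleS (k+1) u (m+1))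
      have e1 : singleS 0 r (m+1) = .var m := by
        rw [singleS_gt (show 0 < m+1 by omega)]; norm_num
      rw [e1]
      show singleS k u m = _
      by_cases h1 : m = k
      · subst h1
        rw [singleS_self (m+1), psubst_shift_cut, singleS_self, shift_as_psubst u 0 m]
        apply psubst_ext; intro j
        rw [if_neg (show ¬ (j < 0) by omega), if_neg (show ¬ (j < 0) by omega),
            singleS_gt (show 0 < j + (m+1) by omega)]
        congr 1 <;> omega
      · by_cases h2 : k < m
        · rw [singleS_gt (show k+1 < m+1 by omega)]
          show singleS k u m = psubst (singleS 0 (r.subst k u)) (.var m)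
          rw [singleS_gt h2]
          show _ = singleS 0 (r.subst k u) m
          rw [singleS_gt (show 0 < m by omega)]
        · rw [singleS_lt (show m+1 < k+1 by omega)]
          show singleS k u m = psubst (singleS 0 (r.subst k u)) (.var (m+1))
          rw [singleS_lt (show m < k by omega)]
          show _ = singleS 0 (r.subst k u) (m+1)
          rw [singleS_gt (show 0 < m+1 by omega)]
          norm_num

theorem shift_subst0 (s r : Tm B C) (c d : ℕ) :
    shift d c (s.subst 0 r) = (shift d (c+1) s).subst 0 (shift d c r) := by
  rw [subst_as_psubst, subst_as_psubst, shift_psubst, psubst_shift_cut]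
  apply psubst_ext; intro n
  cases n with
  | zero =>
      show shift d c (singleS 0 r 0) = if 0 < c + 1 then singleS 0 (shift d c r) 0
        else singleS 0 (shift d c r) (0+d)
      rw [if_pos (show (0:ℕ) < c+1 by omega), singleS_self, singleS_self,
          shift_zero, shift_zero]
  | succ m =>
      show shift d c (singleS 0 r (m+1)) = if m+1 < c + 1 then singleS 0 (shift d c r) (m+1)
        else singleS 0 (shift d c r) (m+1+d)
      rw [singleS_gt (show 0 < m+1 by omega)]
      norm_num
      by_cases h : m < c
      · rw [if_pos h, singleS_gt (show 0 < m+1 by omega)]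
        simp [shift, h]
      · rw [if_neg h, singleS_gt (show 0 < m+1+d by omega)]
        simp only [shift, if_neg h]
        congr 1 <;> omega
  done

theorem shift1_subst (s u : Tm B C) (k : ℕ) :
    (shift 1 0 s).subst (k+1) u = shift 1 0 (s.subst k u) := by
  rw [subst_as_psubst, subst_as_psubst, psubst_shift_cut, shift_psubst]
  apply psubst_ext; intro n
  rw [if_neg (show ¬ (n < 0) by omega)]
  by_cases h1 : n = k
  · subst h1
    rw [singleS_self, singleS_self, shift_add, Nat.add_comm 1 n]
  · by_cases h2 : k < n
    · rw [singleS_gt (show k+1 < n+1 by omega), singleS_gt h2]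
      simp only [shift, if_neg (show ¬ (n-1 < 0) by omega)]
      congr 1 <;> omega
    · rw [singleS_lt (show n+1 < k+1 by omega), singleS_lt (show n < k by omega)]
      simp [shift]

/-- The crucial lemma: substituting into a lifted parallel substitution. -/
theorem psubst_lift_subst (t : Tm B C) (σ : ℕ → Tm B C) (u : Tm B C) :
    (psubst (liftS σ) t).subst 0 u =
      psubst (fun n => match n with | 0 => u | m+1 => σ m) t := by
  rw [subst_as_psubst, psubst_psubst]
  apply psubst_ext; intro n
  cases n with
  | zero => show psubst (singleS 0 u) (.var 0) = u; show singleS 0 u 0 = u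
            rw [singleS_self, shift_zero]
  | succ m =>
      show psubst (singleS 0 u) (shift 1 0 (σ m)) = σ m
      rw [psubst_shift_cut]
      rw [psubst_ext _ (σ' := fun n => .var n), psubst_id]
      intro j
      rw [if_neg (show ¬ (j < 0) by omega), singleS_gt (show 0 < j+1 by omega)]
      norm_num

end Tm

end SNbeta

section SNbeta2

open Tm

/-- Strong normalization w.r.t. βη. -/
def SNt (t : Tm B C) : Prop := Acc (fun a b : Tm B C => BetaEtaStep b a) t

theorem acc_pullback {α β : Sort*} {r : α → α → Prop} {r' : β → β → Prop} (f : α → β)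
    (hf : ∀ a b, r a b → r' (f a) (f b)) :
    ∀ {b}, Acc (fun x y => r' y x) b → ∀ a, f a = b → Acc (fun x y => r y x) a := by
  intro b h
  induction h with
  | intro b hb ih =>
      intro a e
      exact Acc.intro a fun a' ha' => ih (f a') (by rw [← e]; exact hf a a' ha') a' rfl

theorem step_shift {t t' : Tm B C} (h : BetaEtaStep t t') :
    ∀ c d, BetaEtaStep (shift d c t) (shift d c t') := by
  induction h with
  | @beta t u =>
      intro c d
      show BetaEtaStep (.app (.lam (shift d (c+1) t)) (shift d c u)) (shift d c (t.subst 0 u))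
      rw [shift_subst0]
      exact .beta
  | @eta t =>
      intro c d
      show BetaEtaStep (.lam (.app (shift d (c+1) (shift 1 0 t)) (shift d (c+1) (.var 0))))
        (shift d c t)
      rw [shift_shift _ _ _ _ (Nat.zero_le c)]
      have e : shift d (c+1) (.var 0 : Tm B C) = .var 0 := by simp [shift]
      rw [e]
      exact .eta
  | lam h ih => intro c d; exact .lam (ih (c+1) d)
  | appL h ih => intro c d; exact .appL (ih c d)
  | appR h ih => intro c d; exact .appR (ih c d)

theorem step_subst {t t' : Tm B C} (h : BetaEtaStep t t') :
    ∀ k (u : Tm B C), BetaEtaStep (t.subst k u) (t'.subst k u) := by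
  induction h with
  | @beta t r =>
      intro k u
      show BetaEtaStep (.app (.lam (t.subst (k+1) u)) (r.subst k u)) ((t.subst 0 r).subst k u)
      rw [subst_subst0]
      exact .beta
  | @eta t =>
      intro k u
      show BetaEtaStep (.lam (.app ((shift 1 0 t).subst (k+1) u) ((Tm.var 0).subst (k+1) u)))
        (t.subst k u)
      have e : (Tm.var 0 : Tm B C).subst (k+1) u = .var 0 := by
        show (if 0 = k+1 then _ else if k+1 < 0 then _ else _) = _
        rw [if_neg (by omega), if_neg (by omega)]
      rw [e, shift1_subst]
      exact .eta
  | lam h ih => intro k u; exact .lam (ih (k+1) u)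
  | appL h ih => intro k u; exact .appL (ih k u)
  | appR h ih => intro k u; exact .appR (ih k u)

theorem steps_subst_right (t : Tm B C) : ∀ k {u u' : Tm B C}, BetaEtaStep u u' →
    Relation.ReflTransGen BetaEtaStep (t.subst k u) (t.subst k u') := by
  induction t with
  | var n =>
      intro k u u' h
      show Relation.ReflTransGen BetaEtaStep (if n = k then shift k 0 u else _)
        (if n = k then shift k 0 u' else _)
      by_cases hn : n = k
      · rw [if_pos hn, if_pos hn]
        exact Relation.ReflTransGen.single (step_shift h 0 k)
      · rw [if_neg hn, if_neg hn]
  | const c => intro k u u' h; exact Relation.ReflTransGen.refl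
  | lam t ih =>
      intro k u u' h
      exact Relation.ReflTransGen.lift Tm.lam (fun a b hab => BetaEtaStep.lam hab) _ _ (ih (k+1) h)
  | app t s iht ihs =>
      intro k u u' h
      show Relation.ReflTransGen BetaEtaStep (Tm.app (t.subst k u) (s.subst k u))
        (Tm.app (t.subst k u') (s.subst k u'))
      refine Relation.ReflTransGen.trans
        (Relation.ReflTransGen.lift (fun x => Tm.app x (s.subst k u))
          (fun a b hab => BetaEtaStep.appL hab) _ _ (iht k h))
        (Relation.ReflTransGen.lift (fun x => Tm.app (t.subst k u') x)
          (fun a b hab => BetaEtaStep.appR hab) _ _ (ihs k h))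

/-- Reducibility. -/
def Red : Ty B → Tm B C → Prop
  | .base _, t => SNt t
  | .arrow A A', t => ∀ u, Red A u → Red A' (.app t u)

def Neutral : Tm B C → Prop
  | .lam _ => False
  | _ => True

theorem neutral_app (t u : Tm B C) : Neutral (.app t u) := trivial
theorem neutral_var (n : ℕ) : Neutral (.var n : Tm B C) := trivial
theorem neutral_const (c : C) : Neutral (.const c : Tm B C) := trivial

theorem no_step_var {n : ℕ} {t : Tm B C} : ¬ BetaEtaStep (.var n) t := fun h => nomatch h

theorem no_step_const {c : C} {t : Tm B C} : ¬ BetaEtaStep (.const c : Tm B C) t :=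
  fun h => nomatch h

theorem snt_step {t t' : Tm B C} (h : SNt t) (hs : BetaEtaStep t t') : SNt t' := h.inv hs

theorem cr (A : Ty B) :
    (∀ t : Tm B C, Red A t → SNt t) ∧
    (∀ t t' : Tm B C, Red A t → BetaEtaStep t t' → Red A t') ∧
    (∀ t : Tm B C, Neutral t → (∀ t', BetaEtaStep t t' → Red A t') → Red A t) := by
  induction A with
  | base b =>
      exact ⟨fun t h => h, fun t t' h hs => h.inv hs,
        fun t _ h => Acc.intro _ fun t' hs => h t' hs⟩
  | arrow A A' ihA ihA' =>
      obtain ⟨sn1, cr2A, cr3A⟩ := ihA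
      obtain ⟨sn1', cr2A', cr3A'⟩ := ihA'
      have redvar : ∀ n, Red A (.var n : Tm B C) :=
        fun n => cr3A _ (neutral_var n) (fun t' hs => absurd hs no_step_var)
      refine ⟨?_, ?_, ?_⟩
      · intro t ht
        have h2 : SNt (.app t (.var 0)) := sn1' _ (ht _ (redvar 0))
        exact acc_pullback (fun s => Tm.app s (.var 0))
          (fun a b h => BetaEtaStep.appL h) h2 _ rfl
      · intro t t' ht hs u hu
        exact cr2A' _ _ (ht u hu) (.appL hs)
      · intro t hneut hred
        have main : ∀ u : Tm B C, SNt u → Red A u → Red A' (.app t u) := by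
          intro u snu
          induction snu with
          | intro u hsu ih =>
              intro hu
              apply cr3A' _ (neutral_app _ _)
              intro w hw
              cases hw with
              | beta => exact False.elim hneut
              | appL h => exact hred _ h u hu
              | appR h => exact ih _ h (cr2A _ _ hu h)
        exact fun u hu => main u (sn1 _ hu) hu

theorem red_var (A : Ty B) (n : ℕ) : Red A (.var n : Tm B C) :=
  (cr A).2.2 _ (neutral_var n) (fun _ hs => absurd hs no_step_var)

theorem red_lam {A A' : Ty B} {t : Tm B C}
    (h : ∀ u, Red A u → Red A' (t.subst 0 u)) : Red (Ty.arrow A A') (.lam t) := by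
  have snt : SNt t := by
    have h2 := (cr A').1 _ (h _ (red_var A 0))
    exact acc_pullback (fun s : Tm B C => s.subst 0 (.var 0))
      (fun a b hs => step_subst hs 0 _) h2 _ rfl
  have aux : ∀ t : Tm B C, SNt t → ∀ u : Tm B C, SNt u →
      (∀ v, Red A v → Red A' (t.subst 0 v)) → Red A u → Red A' (.app (.lam t) u) := by
    intro t snt
    induction snt with
    | intro t hst iht =>
        intro u snu
        induction snu with
        | intro u hsu ihu =>
            intro ht hu
            apply (cr A').2.2 _ (neutral_app _ _)
            intro w hw
            cases hw with
            | beta => exact ht u hu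
            | appL hl =>
                cases hl with
                | lam hstep =>
                    exact iht _ hstep u (Acc.intro u hsu)
                      (fun v hv => (cr A').2.1 _ _ (ht v hv) (step_subst hstep 0 _)) hu
                | eta =>
                    rename_i t0
                    have h2 := ht u hu
                    have e : (Tm.app (shift 1 0 t0) (.var 0)).subst 0 u = .app t0 u := by
                      show Tm.app ((shift 1 0 t0).subst 0 u) ((Tm.var 0).subst 0 u) = _
                      rw [subst_shift_cancel]
                      have e2 : (Tm.var 0 : Tm B C).subst 0 u = u := by
                        show (if 0 = 0 then shift 0 0 u else _) = u
                        rw [if_pos rfl, shift_zero]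
                      rw [e2]
                    rw [e] at h2
                    exact h2
            | appR hr => exact ihu _ hr ht ((cr A).2.1 _ _ hu hr)
  intro u hu
  exact aux t snt u ((cr A).1 _ hu) h hu

theorem fundamental {sig : C → Ty B} {Γ : List (Ty B)} {t : Tm B C} {A : Ty B}
    (h : TmTy sig Γ t A) :
    ∀ σ : ℕ → Tm B C, (∀ n A', Γ[n]? = some A' → Red A' (σ n)) → Red A (psubst σ t) := by
  induction h with
  | var hΓ => intro σ hσ; exact hσ _ _ hΓ
  | const => intro σ hσ; exact (cr _).2.2 _ (neutral_const _) (fun t' h => absurd h no_step_const)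
  | lam hb ih =>
      intro σ hσ
      rw [psubst_lam]
      apply red_lam
      intro u hu
      rw [psubst_lift_subst]
      apply ih
      intro n A' hn
      cases n with
      | zero =>
          simp only [List.getElem?_cons_zero] at hn
          cases hn
          exact hu
      | succ m =>
          simp only [List.getElem?_cons_succ] at hn
          exact hσ m A' hn
  | app hf ha ihf iha =>
      intro σ hσ
      exact (ihf σ hσ) _ (iha σ hσ)

theorem sn_typable {sig : C → Ty B} {Γ : List (Ty B)} {t : Tm B C} {A : Ty B}
    (h : TmTy sig Γ t A) : SNt t := by
  have h2 := fundamental h (fun n => .var n) (fun n A' _ => red_var A' n)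
  rw [psubst_id] at h2
  exact (cr A).1 _ h2

end SNbeta2

section Flatten1

/-- The βη-only part of the flattening system. -/
inductive BEStepRaw : Rw B C R → Rw B C R → Prop
  | betaM : Rw.IsMultistep μ → Rw.IsMultistep ν →
      BEStepRaw (.app (.lam μ) ν) (Rw.substR μ 0 ν)
  | etaM : Rw.IsMultistep μ → BEStepRaw (.lam (.app (Rw.shiftR 1 0 μ) (.var 0))) μ
  | congLam : BEStepRaw ρ ρ' → BEStepRaw (.lam ρ) (.lam ρ')
  | congAppL : BEStepRaw ρ ρ' → BEStepRaw (.app ρ σ) (.app ρ' σ)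
  | congAppR : BEStepRaw σ σ' → BEStepRaw (.app ρ σ) (.app ρ σ')
  | congCompL : BEStepRaw ρ ρ' → BEStepRaw (.comp ρ σ) (.comp ρ' σ)
  | congCompR : BEStepRaw σ σ' → BEStepRaw (.comp ρ σ) (.comp ρ σ')

theorem ms_shiftR {μ : Rw B C R} (h : Rw.IsMultistep μ) :
    ∀ c d, Rw.IsMultistep (Rw.shiftR d c μ) := by
  induction μ with
  | var n => intro c d; show Rw.IsMultistep (if n < c then _ else _); split <;> trivial
  | const c => intro c d; trivial
  | rule r => intro c d; trivial
  | lam ρ ih => intro c d; exact ih h (c+1) d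
  | app ρ σ ih1 ih2 => intro c d; exact ⟨ih1 h.1 c d, ih2 h.2 c d⟩
  | comp ρ σ ih1 ih2 => exact False.elim h

theorem ms_substR {μ : Rw B C R} (h : Rw.IsMultistep μ) :
    ∀ k {ν : Rw B C R}, Rw.IsMultistep ν → Rw.IsMultistep (Rw.substR μ k ν) := by
  induction μ with
  | var n =>
      intro k ν hν
      show Rw.IsMultistep (if n = k then _ else if k < n then _ else _)
      split
      · exact ms_shiftR hν 0 k
      · split <;> trivial
  | const c => intro k ν hν; trivial
  | rule r => intro k ν hν; trivial
  | lam ρ ih => intro k ν hν; exact ih h (k+1) hν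
  | app ρ σ ih1 ih2 => intro k ν hν; exact ⟨ih1 h.1 k hν, ih2 h.2 k hν⟩
  | comp ρ σ ih1 ih2 => exact False.elim h

theorem ms_toRw (t : Tm B C) : Rw.IsMultistep (Tm.toRw t : Rw B C R) := by
  induction t with
  | var n => trivial
  | const c => trivial
  | lam t ih => exact ih
  | app t u ih1 ih2 => exact ⟨ih1, ih2⟩

theorem ms_back {ρ σ : Rw B C R} (h : BEStepRaw ρ σ) (hm : Rw.IsMultistep σ) :
    Rw.IsMultistep ρ := by
  induction h with
  | betaM h1 h2 => exact ⟨h1, h2⟩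
  | etaM h1 => exact ⟨ms_shiftR h1 0 1, trivial⟩
  | congLam h ih => exact ih hm
  | congAppL h ih => exact ⟨ih hm.1, hm.2⟩
  | congAppR h ih => exact ⟨hm.1, ih hm.2⟩
  | congCompL h ih => exact False.elim hm
  | congCompR h ih => exact False.elim hm

theorem bestep_not_ms {ρ σ : Rw B C R} (h : BEStepRaw ρ σ) (hm : ¬ Rw.IsMultistep ρ) :
    ¬ Rw.IsMultistep σ := fun hms => hm (ms_back h hms)

/-- Erasure of a rewrite to a term over constants `C ⊕ R`. -/
def erase : Rw B C R → Tm B (C ⊕ R)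
  | .var n => .var n
  | .const c => .const (Sum.inl c)
  | .rule r => .const (Sum.inr r)
  | .lam ρ => .lam (erase ρ)
  | .app ρ σ => .app (erase ρ) (erase σ)
  | .comp _ σ => erase σ

theorem erase_shiftR (ρ : Rw B C R) : ∀ c d,
    erase (Rw.shiftR d c ρ) = Tm.shift d c (erase ρ) := by
  induction ρ with
  | var n => intro c d; by_cases h : n < c <;> simp [Rw.shiftR, erase, Tm.shift, h]
  | const c => intros; rfl
  | rule r => intros; rfl
  | lam ρ ih => intro c d; show Tm.lam _ = Tm.lam _; rw [ih]
  | app ρ σ ih1 ih2 => intro c d; show Tm.app _ _ = Tm.app _ _; rw [ih1, ih2]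
  | comp ρ σ ih1 ih2 => intro c d; exact ih2 c d

theorem erase_substR (ρ : Rw B C R) : ∀ k (ν : Rw B C R),
    erase (Rw.substR ρ k ν) = (erase ρ).subst k (erase ν) := by
  induction ρ with
  | var n =>
      intro k ν
      show erase (if n = k then _ else if k < n then _ else _) =
        (if n = k then _ else if k < n then _ else _)
      by_cases h1 : n = k
      · rw [if_pos h1, if_pos h1, erase_shiftR]
      · rw [if_neg h1, if_neg h1]
        by_cases h2 : k < n
        · rw [if_pos h2, if_pos h2]; rfl
        · rw [if_neg h2, if_neg h2]; rfl
  | const c => intros; rfl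
  | rule r => intros; rfl
  | lam ρ ih => intro k ν; show Tm.lam _ = Tm.lam _; rw [ih]
  | app ρ σ ih1 ih2 => intro k ν; show Tm.app _ _ = Tm.app _ _; rw [ih1, ih2]
  | comp ρ σ ih1 ih2 => intro k ν; exact ih2 k ν

/-- Signature for erased rewrites. -/
def sigE (S : HRS B C R) : C ⊕ R → Ty B
  | .inl c => S.sig c
  | .inr r => S.ruleTy r

theorem erase_ty {S : HRS B C R} {Γ : List (Ty B)} {ρ : Rw B C R} {s t : Tm B C} {A : Ty B}
    (h : RwTy S Γ ρ s t A) : TmTy (sigE S) Γ (erase ρ) A := by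
  induction h with
  | var h => exact .var h
  | const => exact TmTy.const
  | rule => exact TmTy.const
  | abs h ih => exact .lam ih
  | app h1 h2 ih1 ih2 => exact .app ih1 ih2
  | comp h1 h2 ih1 ih2 => exact ih2
  | conv h e1 e2 ih => exact ih

theorem erase_step {ρ σ : Rw B C R} (h : BEStepRaw ρ σ) (hm : Rw.IsMultistep ρ) :
    BetaEtaStep (erase ρ) (erase σ) ∧ Rw.IsMultistep σ := by
  induction h with
  | @betaM μ ν h1 h2 =>
      refine ⟨?_, ms_substR h1 0 h2⟩
      show BetaEtaStep (.app (.lam (erase μ)) (erase ν)) _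
      rw [erase_substR]
      exact .beta
  | @etaM μ h1 =>
      refine ⟨?_, h1⟩
      show BetaEtaStep (.lam (.app (erase (Rw.shiftR 1 0 μ)) (.var 0))) (erase μ)
      rw [erase_shiftR]
      exact .eta
  | congLam h ih =>
      obtain ⟨hs, hms⟩ := ih hm
      exact ⟨.lam hs, hms⟩
  | congAppL h ih =>
      obtain ⟨hs, hms⟩ := ih hm.1
      exact ⟨.appL hs, hms, hm.2⟩
  | congAppR h ih =>
      obtain ⟨hs, hms⟩ := ih hm.2
      exact ⟨.appR hs, hm.1, hms⟩
  | congCompL h ih => exact False.elim hm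
  | congCompR h ih => exact False.elim hm

theorem rwty_lam_inv {S : HRS B C R} {Γ : List (Ty B)} {ρ₀ : Rw B C R} {s t : Tm B C}
    {A : Ty B} (h : RwTy S Γ ρ₀ s t A) : ∀ {ρ : Rw B C R}, ρ₀ = .lam ρ → WT S ρ := by
  induction h with
  | abs h ih => intro ρ e; cases e; exact ⟨_, _, _, _, h⟩
  | conv h _ _ ih => intro ρ e; exact ih e
  | var h => intro ρ e; exact nomatch e
  | const => intro ρ e; exact nomatch e
  | rule => intro ρ e; exact nomatch e
  | app h1 h2 ih1 ih2 => intro ρ e; exact nomatch e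
  | comp h1 h2 ih1 ih2 => intro ρ e; exact nomatch e

theorem rwty_app_inv {S : HRS B C R} {Γ : List (Ty B)} {ρ₀ : Rw B C R} {s t : Tm B C}
    {A : Ty B} (h : RwTy S Γ ρ₀ s t A) :
    ∀ {ρ σ : Rw B C R}, ρ₀ = .app ρ σ → WT S ρ ∧ WT S σ := by
  induction h with
  | app h1 h2 ih1 ih2 => intro ρ σ e; cases e; exact ⟨⟨_, _, _, _, h1⟩, ⟨_, _, _, _, h2⟩⟩
  | conv h _ _ ih => intro ρ σ e; exact ih e
  | var h => intro ρ σ e; exact nomatch e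
  | const => intro ρ σ e; exact nomatch e
  | rule => intro ρ σ e; exact nomatch e
  | abs h ih => intro ρ σ e; exact nomatch e
  | comp h1 h2 ih1 ih2 => intro ρ σ e; exact nomatch e

theorem rwty_comp_inv {S : HRS B C R} {Γ : List (Ty B)} {ρ₀ : Rw B C R} {s t : Tm B C}
    {A : Ty B} (h : RwTy S Γ ρ₀ s t A) :
    ∀ {ρ σ : Rw B C R}, ρ₀ = .comp ρ σ → WT S ρ ∧ WT S σ := by
  induction h with
  | comp h1 h2 ih1 ih2 => intro ρ σ e; cases e; exact ⟨⟨_, _, _, _, h1⟩, ⟨_, _, _, _, h2⟩⟩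
  | conv h _ _ ih => intro ρ σ e; exact ih e
  | var h => intro ρ σ e; exact nomatch e
  | const => intro ρ σ e; exact nomatch e
  | rule => intro ρ σ e; exact nomatch e
  | abs h ih => intro ρ σ e; exact nomatch e
  | app h1 h2 ih1 ih2 => intro ρ σ e; exact nomatch e

theorem wt_lam_inv {S : HRS B C R} {ρ : Rw B C R} (h : WT S (.lam ρ)) : WT S ρ := by
  obtain ⟨Γ, s, t, A, h⟩ := h; exact rwty_lam_inv h rfl

theorem wt_app_inv {S : HRS B C R} {ρ σ : Rw B C R} (h : WT S (.app ρ σ)) :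
    WT S ρ ∧ WT S σ := by
  obtain ⟨Γ, s, t, A, h⟩ := h; exact rwty_app_inv h rfl

theorem wt_comp_inv {S : HRS B C R} {ρ σ : Rw B C R} (h : WT S (.comp ρ σ)) :
    WT S ρ ∧ WT S σ := by
  obtain ⟨Γ, s, t, A, h⟩ := h; exact rwty_comp_inv h rfl

/-- βη-steps between typable rewrites. -/
def R3 (S : HRS B C R) (ρ σ : Rw B C R) : Prop := BEStepRaw ρ σ ∧ WT S ρ

theorem acc_R3_ms {S : HRS B C R} :
    ∀ {t : Tm B (C ⊕ R)}, Acc (fun a b => BetaEtaStep b a) t →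
    ∀ μ : Rw B C R, Rw.IsMultistep μ → erase μ = t →
      Acc (fun a b : Rw B C R => R3 S b a) μ := by
  intro t h
  induction h with
  | intro t ht ih =>
      intro μ hm he
      refine Acc.intro μ fun σ hσ => ?_
      obtain ⟨hstep, hms⟩ := erase_step hσ.1 hm
      exact ih (erase σ) (he ▸ hstep) σ hms rfl

theorem acc_R3_of_ms {S : HRS B C R} {μ : Rw B C R} (hm : Rw.IsMultistep μ) :
    Acc (fun a b : Rw B C R => R3 S b a) μ := by
  by_cases hwt : WT S μ
  · obtain ⟨Γ, s, t, A, h⟩ := hwt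
    exact acc_R3_ms (sn_typable (erase_ty h)) μ hm rfl
  · exact Acc.intro μ fun σ hσ => absurd hσ.2 hwt

theorem acc_R3_lam {S : HRS B C R} {ρ : Rw B C R}
    (h : Acc (fun a b : Rw B C R => R3 S b a) ρ) :
    ¬ Rw.IsMultistep ρ → Acc (fun a b : Rw B C R => R3 S b a) (.lam ρ) := by
  induction h with
  | intro ρ hρ ih =>
      intro hm
      refine Acc.intro _ fun σ hσ => ?_
      obtain ⟨hstep, hwt⟩ := hσ
      cases hstep with
      | etaM h1 => exact absurd ⟨ms_shiftR h1 0 1, trivial⟩ hm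
      | congLam h' => exact ih _ ⟨h', wt_lam_inv hwt⟩ (bestep_not_ms h' hm)

theorem acc_R3_app {S : HRS B C R} : ∀ {ρ : Rw B C R},
    Acc (fun a b : Rw B C R => R3 S b a) ρ → ∀ {σ : Rw B C R},
    Acc (fun a b : Rw B C R => R3 S b a) σ →
    ¬ Rw.IsMultistep (Rw.app ρ σ) → Acc (fun a b : Rw B C R => R3 S b a) (.app ρ σ) := by
  intro ρ hρ
  induction hρ with
  | intro ρ h1 ih1 =>
      intro σ hσ
      induction hσ with
      | intro σ h2 ih2 =>
          intro hm
          refine Acc.intro _ fun τ hτ => ?_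
          obtain ⟨hstep, hwt⟩ := hτ
          cases hstep with
          | betaM hμ hν => exact absurd ⟨hμ, hν⟩ hm
          | congAppL h' =>
              exact ih1 _ ⟨h', (wt_app_inv hwt).1⟩ (Acc.intro σ h2)
                (fun hm' => hm ⟨ms_back h' hm'.1, hm'.2⟩)
          | congAppR h' =>
              exact ih2 _ ⟨h', (wt_app_inv hwt).2⟩
                (fun hm' => hm ⟨hm'.1, ms_back h' hm'.2⟩)

theorem acc_R3_comp {S : HRS B C R} : ∀ {ρ : Rw B C R},
    Acc (fun a b : Rw B C R => R3 S b a) ρ → ∀ {σ : Rw B C R},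
    Acc (fun a b : Rw B C R => R3 S b a) σ →
    Acc (fun a b : Rw B C R => R3 S b a) (.comp ρ σ) := by
  intro ρ hρ
  induction hρ with
  | intro ρ h1 ih1 =>
      intro σ hσ
      induction hσ with
      | intro σ h2 ih2 =>
          refine Acc.intro _ fun τ hτ => ?_
          obtain ⟨hstep, hwt⟩ := hτ
          cases hstep with
          | congCompL h' => exact ih1 _ ⟨h', (wt_comp_inv hwt).1⟩ (Acc.intro σ h2)
          | congCompR h' => exact ih2 _ ⟨h', (wt_comp_inv hwt).2⟩

theorem acc_R3 {S : HRS B C R} : ∀ ρ : Rw B C R, Acc (fun a b : Rw B C R => R3 S b a) ρ := by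
  intro ρ
  induction ρ with
  | var n => exact acc_R3_of_ms trivial
  | const c => exact acc_R3_of_ms trivial
  | rule r => exact acc_R3_of_ms trivial
  | lam ρ ih =>
      by_cases hm : Rw.IsMultistep ρ
      · exact acc_R3_of_ms (show Rw.IsMultistep (.lam ρ) from hm)
      · exact acc_R3_lam ih hm
  | app ρ σ ih1 ih2 =>
      by_cases hm : Rw.IsMultistep (Rw.app ρ σ)
      · exact acc_R3_of_ms hm
      · exact acc_R3_app ih1 ih2 hm
  | comp ρ σ ih1 ih2 => exact acc_R3_comp ih1 ih2

end Flatten1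

section Flatten2

/-- Multiplicative weight on rewrites (strictly decreasing on App1–App3). -/
def W1 : Rw B C R → ℕ
  | .var _ => 1
  | .const _ => 1
  | .rule _ => 1
  | .lam ρ => W1 ρ
  | .app ρ σ => W1 ρ * W1 ρ * (W1 σ * W1 σ)
  | .comp ρ σ => W1 ρ + W1 σ + 1

/-- Number of compositions. -/
def NC : Rw B C R → ℕ
  | .lam ρ => NC ρ
  | .app ρ σ => NC ρ + NC σ
  | .comp ρ σ => NC ρ + NC σ + 1
  | _ => 0

/-- Total number of abstractions above compositions. -/
def DD : Rw B C R → ℕ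
  | .lam ρ => DD ρ + NC ρ
  | .app ρ σ => DD ρ + DD σ
  | .comp ρ σ => DD ρ + DD σ
  | _ => 0

theorem W1_pos (ρ : Rw B C R) : 1 ≤ W1 ρ := by
  induction ρ with
  | var n => exact le_refl 1
  | const c => exact le_refl 1
  | rule r => exact le_refl 1
  | lam ρ ih => exact ih
  | app ρ σ ih1 ih2 =>
      show 1 ≤ W1 ρ * W1 ρ * (W1 σ * W1 σ)
      exact Nat.mul_pos (Nat.mul_pos ih1 ih1) (Nat.mul_pos ih2 ih2)
  | comp ρ σ ih1 ih2 => show 1 ≤ W1 ρ + W1 σ + 1; omega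

theorem ms_W1 {ρ : Rw B C R} (h : Rw.IsMultistep ρ) : W1 ρ = 1 := by
  induction ρ with
  | var n => rfl
  | const c => rfl
  | rule r => rfl
  | lam ρ ih => exact ih h
  | app ρ σ ih1 ih2 => show W1 ρ * W1 ρ * (W1 σ * W1 σ) = 1; rw [ih1 h.1, ih2 h.2]
  | comp ρ σ _ _ => exact False.elim h

theorem ms_NC {ρ : Rw B C R} (h : Rw.IsMultistep ρ) : NC ρ = 0 := by
  induction ρ with
  | var n => rfl
  | const c => rfl
  | rule r => rfl
  | lam ρ ih => exact ih h
  | app ρ σ ih1 ih2 => show NC ρ + NC σ = 0; rw [ih1 h.1, ih2 h.2]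
  | comp ρ σ _ _ => exact False.elim h

theorem ms_DD {ρ : Rw B C R} (h : Rw.IsMultistep ρ) : DD ρ = 0 := by
  induction ρ with
  | var n => rfl
  | const c => rfl
  | rule r => rfl
  | lam ρ ih =>
      show DD ρ + NC ρ = 0
      rw [ih h, ms_NC (show Rw.IsMultistep ρ from h)]
  | app ρ σ ih1 ih2 => show DD ρ + DD σ = 0; rw [ih1 h.1, ih2 h.2]
  | comp ρ σ _ _ => exact False.elim h

theorem ineq_app1 {a b : ℕ} (ha : 1 ≤ a) (hb : 1 ≤ b) :
    a * a + b * b + 1 < (a + b + 1) * (a + b + 1) := by nlinarith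

theorem ineq_app3 {p q : ℕ} (hp : 3 ≤ p) (hq : 3 ≤ q) :
    p * p + q * q + 1 < p * p * (q * q) := by
  obtain ⟨x, rfl⟩ : ∃ x, p = x + 3 := ⟨p - 3, by omega⟩
  obtain ⟨y, rfl⟩ : ∃ y, q = y + 3 := ⟨q - 3, by omega⟩
  nlinarith [Nat.zero_le (x*y), Nat.zero_le (x*x*(y*y))]

/-- The main decrease lemma for the flattening system. -/
theorem decrease {S : HRS B C R} {ρ σ : Rw B C R} (h : FStepRaw S ρ σ) :
    W1 σ < W1 ρ ∨ (W1 σ = W1 ρ ∧ NC σ = NC ρ ∧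
      (DD σ < DD ρ ∨ (DD σ = DD ρ ∧ BEStepRaw ρ σ))) := by
  induction h with
  | @abs ρ σ =>
      right
      refine ⟨rfl, rfl, Or.inl ?_⟩
      show DD ρ + NC ρ + (DD σ + NC σ) < DD ρ + DD σ + (NC ρ + NC σ + 1)
      omega
  | @app1 μ ρ σ hμ =>
      left
      show W1 ρ * W1 ρ * (W1 (Tm.toRw (Rw.src S μ)) * W1 (Tm.toRw (Rw.src S μ))) +
          W1 σ * W1 σ * (W1 μ * W1 μ) + 1 <
        (W1 ρ + W1 σ + 1) * (W1 ρ + W1 σ + 1) * (W1 μ * W1 μ)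
      rw [ms_W1 hμ, ms_W1 (ms_toRw _)]
      simpa using ineq_app1 (W1_pos ρ) (W1_pos σ)
  | @app2 μ ρ σ hμ =>
      left
      show W1 μ * W1 μ * (W1 ρ * W1 ρ) +
          W1 (Tm.toRw (Rw.tgt S μ)) * W1 (Tm.toRw (Rw.tgt S μ)) * (W1 σ * W1 σ) + 1 <
        W1 μ * W1 μ * ((W1 ρ + W1 σ + 1) * (W1 ρ + W1 σ + 1))
      rw [ms_W1 hμ, ms_W1 (ms_toRw _)]
      simpa using ineq_app1 (W1_pos ρ) (W1_pos σ)
  | @app3 ρ₁ ρ₂ σ₁ σ₂ =>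
      left
      show (W1 ρ₁ + W1 ρ₂ + 1) * (W1 ρ₁ + W1 ρ₂ + 1) *
            (W1 (Tm.toRw (Rw.src S σ₁)) * W1 (Tm.toRw (Rw.src S σ₁))) +
          W1 (Tm.toRw (Rw.tgt S ρ₂)) * W1 (Tm.toRw (Rw.tgt S ρ₂)) *
            ((W1 σ₁ + W1 σ₂ + 1) * (W1 σ₁ + W1 σ₂ + 1)) + 1 <
        (W1 ρ₁ + W1 ρ₂ + 1) * (W1 ρ₁ + W1 ρ₂ + 1) *
          ((W1 σ₁ + W1 σ₂ + 1) * (W1 σ₁ + W1 σ₂ + 1))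
      rw [ms_W1 (ms_toRw _), ms_W1 (ms_toRw _)]
      have h1 : 3 ≤ W1 ρ₁ + W1 ρ₂ + 1 := by
        have := W1_pos ρ₁; have := W1_pos ρ₂; omega
      have h2 : 3 ≤ W1 σ₁ + W1 σ₂ + 1 := by
        have := W1_pos σ₁; have := W1_pos σ₂; omega
      simpa using ineq_app3 h1 h2
  | @betaM μ ν hμ hν =>
      right
      have m1 : Rw.IsMultistep (Rw.app (.lam μ) ν) := ⟨hμ, hν⟩
      have m2 : Rw.IsMultistep (Rw.substR μ 0 ν) := ms_substR hμ 0 hν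
      refine ⟨?_, ?_, Or.inr ⟨?_, .betaM hμ hν⟩⟩
      · rw [ms_W1 m1, ms_W1 m2]
      · rw [ms_NC m1, ms_NC m2]
      · rw [ms_DD m1, ms_DD m2]
  | @etaM μ hμ =>
      right
      have m1 : Rw.IsMultistep (Rw.lam (.app (Rw.shiftR 1 0 μ) (.var 0))) :=
        ⟨ms_shiftR hμ 0 1, trivial⟩
      refine ⟨?_, ?_, Or.inr ⟨?_, .etaM hμ⟩⟩
      · rw [ms_W1 m1, ms_W1 hμ]
      · rw [ms_NC m1, ms_NC hμ]
      · rw [ms_DD m1, ms_DD hμ]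
  | @congLam ρ ρ' h ih =>
      rcases ih with h1 | ⟨h1, h2, h3⟩
      · left; exact h1
      · right
        refine ⟨h1, h2, ?_⟩
        rcases h3 with h3 | ⟨h3, h4⟩
        · left; show DD ρ' + NC ρ' < DD ρ + NC ρ; omega
        · right; exact ⟨by show DD ρ' + NC ρ' = DD ρ + NC ρ; omega, .congLam h4⟩
  | @congAppL ρ ρ' σ h ih =>
      rcases ih with h1 | ⟨h1, h2, h3⟩
      · left
        show W1 ρ' * W1 ρ' * (W1 σ * W1 σ) < W1 ρ * W1 ρ * (W1 σ * W1 σ)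
        exact mul_lt_mul_of_pos_right (mul_lt_mul'' h1 h1 (Nat.zero_le _) (Nat.zero_le _))
          (Nat.mul_pos (W1_pos σ) (W1_pos σ))
      · right
        refine ⟨by show W1 ρ' * W1 ρ' * (W1 σ * W1 σ) = W1 ρ * W1 ρ * (W1 σ * W1 σ); rw [h1],
          by show NC ρ' + NC σ = NC ρ + NC σ; omega, ?_⟩
        rcases h3 with h3 | ⟨h3, h4⟩
        · left; show DD ρ' + DD σ < DD ρ + DD σ; omega
        · right; exact ⟨by show DD ρ' + DD σ = DD ρ + DD σ; omega, .congAppL h4⟩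
  | @congAppR σ σ' ρ h ih =>
      rcases ih with h1 | ⟨h1, h2, h3⟩
      · left
        show W1 ρ * W1 ρ * (W1 σ' * W1 σ') < W1 ρ * W1 ρ * (W1 σ * W1 σ)
        exact mul_lt_mul_of_pos_left (mul_lt_mul'' h1 h1 (Nat.zero_le _) (Nat.zero_le _))
          (Nat.mul_pos (W1_pos ρ) (W1_pos ρ))
      · right
        refine ⟨by show W1 ρ * W1 ρ * (W1 σ' * W1 σ') = W1 ρ * W1 ρ * (W1 σ * W1 σ); rw [h1],
          by show NC ρ + NC σ' = NC ρ + NC σ; omega, ?_⟩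
        rcases h3 with h3 | ⟨h3, h4⟩
        · left; show DD ρ + DD σ' < DD ρ + DD σ; omega
        · right; exact ⟨by show DD ρ + DD σ' = DD ρ + DD σ; omega, .congAppR h4⟩
  | @congCompL ρ ρ' σ h ih =>
      rcases ih with h1 | ⟨h1, h2, h3⟩
      · left; show W1 ρ' + W1 σ + 1 < W1 ρ + W1 σ + 1; omega
      · right
        refine ⟨by show W1 ρ' + W1 σ + 1 = W1 ρ + W1 σ + 1; omega,
          by show NC ρ' + NC σ + 1 = NC ρ + NC σ + 1; omega, ?_⟩
        rcases h3 with h3 | ⟨h3, h4⟩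
        · left; show DD ρ' + DD σ < DD ρ + DD σ; omega
        · right; exact ⟨by show DD ρ' + DD σ = DD ρ + DD σ; omega, .congCompL h4⟩
  | @congCompR σ σ' ρ h ih =>
      rcases ih with h1 | ⟨h1, h2, h3⟩
      · left; show W1 ρ + W1 σ' + 1 < W1 ρ + W1 σ + 1; omega
      · right
        refine ⟨by show W1 ρ + W1 σ' + 1 = W1 ρ + W1 σ + 1; omega,
          by show NC ρ + NC σ' + 1 = NC ρ + NC σ + 1; omega, ?_⟩
        rcases h3 with h3 | ⟨h3, h4⟩
        · left; show DD ρ + DD σ' < DD ρ + DD σ; omega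
        · right; exact ⟨by show DD ρ + DD σ' = DD ρ + DD σ; omega, .congCompR h4⟩

theorem acc_F_aux (S : HRS B C R) (n : ℕ) :
    ∀ d, ∀ ρ : Rw B C R, W1 ρ = n → DD ρ = d → Acc (fun a b : Rw B C R => FStep S b a) ρ := by
  induction n using Nat.strong_induction_on with
  | _ n ihn =>
    intro d
    induction d using Nat.strong_induction_on with
    | _ d ihd =>
      intro ρ
      induction acc_R3 (S := S) ρ with
      | intro ρ hρ ih =>
        intro hn hd
        refine Acc.intro ρ fun σ hσ => ?_
        obtain ⟨hraw, hwt⟩ := hσ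
        rcases decrease hraw with h | ⟨h1, h2, h3 | ⟨h3, h4⟩⟩
        · exact ihn (W1 σ) (by omega) (DD σ) σ rfl rfl
        · exact ihd (DD σ) (by omega) σ (by omega) rfl
        · exact ih σ ⟨h4, hwt⟩ (by omega) (by omega)

theorem acc_F (S : HRS B C R) (ρ : Rw B C R) :
    Acc (fun a b : Rw B C R => FStep S b a) ρ :=
  acc_F_aux S (W1 ρ) (DD ρ) ρ rfl rfl

end Flatten2

end HOR

open HOR in
/-- the flattening system `F` is strongly normalizing:
there is no infinite sequence of `↦`-steps. -/
theorem statement4 {B C R : Type} (S : HRS B C R) (hOrth : Orthogonal S) :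
    WellFounded (fun a b : Rw B C R => FStep S b a) :=
  ⟨fun ρ => HOR.acc_F S ρ⟩
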